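/- Let $E \subseteq \mathbb{F}_q^2$ and $\nu(t) = |\{(x,y) \in E \times E : \|x-y\| = t\}|$. Then $\sum_{t \in \mathbb{F}_q} \nu(t)^2 = q^6 \sum_{t \in \mathbb{F}_q} \big(\sum_{m \in S_t} |\widehat{E}(m)|^2\big)^2 + q^{-1}|E|^4 - q|E|^2$. -/

import Mathlib

open Finset

set_option linter.unusedSectionVars false
set_option maxHeartbeats 1000000
variable {F : Type} [Field F] [Fintype F] [DecidableEq F]

lemma orth (χ : AddChar F ℂ) (hχ : χ ≠ 1) (a : F) :
    ∑ s : F, χ (s * a) = if a = 0 then (Fintype.card F : ℂ) else 0 := by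
  rw [AddChar.sum_mulShift a (AddChar.IsPrimitive.of_ne_one hχ)]
  push_cast
  rfl

noncomputable def g1 (χ : AddChar F ℂ) (s c : F) : ℂ := ∑ u : F, χ (s * u^2 + c * u)

lemma g1_zero (χ : AddChar F ℂ) (hχ : χ ≠ 1) (c : F) :
    g1 χ 0 c = if c = 0 then (Fintype.card F : ℂ) else 0 := by
  rw [← orth χ hχ c]
  refine Finset.sum_congr rfl fun u _ => ?_
  ring_nf

lemma g1_shift (χ : AddChar F ℂ) (hchar : ringChar F ≠ 2) {s : F} (hs : s ≠ 0) (c : F) :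
    g1 χ s c = χ (-(c^2/(4*s))) * g1 χ s 0 := by
  have h2 : (2 : F) ≠ 0 := Ring.two_ne_zero hchar
  have h4 : (4 : F) ≠ 0 := by
    have : (4 : F) = 2 * 2 := by norm_num
    rw [this]; exact mul_ne_zero h2 h2
  unfold g1
  rw [Finset.mul_sum]
  refine Fintype.sum_equiv (Equiv.addRight (c / (2 * s))) _ _ fun u => ?_
  simp only [Equiv.coe_addRight]
  rw [← AddChar.map_add_eq_mul]
  congr 1
  field_simp
  ring

lemma g1_mul (χ : AddChar F ℂ) (hχ : χ ≠ 1) (hchar : ringChar F ≠ 2) {s : F} (hs : s ≠ 0) :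
    g1 χ s 0 * g1 χ (-s) 0 = (Fintype.card F : ℂ) := by
  have h2 : (2 : F) ≠ 0 := Ring.two_ne_zero hchar
  unfold g1
  rw [Finset.sum_mul_sum]
  have step1 : ∀ v : F, ∑ u : F, χ (s * u ^ 2 + 0 * u) * χ (-s * v ^ 2 + 0 * v)
      = ∑ w : F, χ (s * w ^ 2) * χ (v * (2 * s * w)) := by
    intro v
    refine Fintype.sum_equiv (Equiv.subRight v) _ _ fun w => ?_
    simp only [Equiv.subRight_apply]
    rw [← AddChar.map_add_eq_mul, ← AddChar.map_add_eq_mul]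
    congr 1
    ring
  rw [Finset.sum_comm]
  calc ∑ v : F, ∑ u : F, χ (s * u ^ 2 + 0 * u) * χ (-s * v ^ 2 + 0 * v)
      = ∑ v : F, ∑ w : F, χ (s * w ^ 2) * χ (v * (2 * s * w)) := by
        exact Finset.sum_congr rfl fun v _ => step1 v
    _ = ∑ w : F, χ (s * w ^ 2) * ∑ v : F, χ (v * (2 * s * w)) := by
        rw [Finset.sum_comm]
        exact Finset.sum_congr rfl fun w _ => (Finset.mul_sum _ _ _).symm
    _ = (Fintype.card F : ℂ) := by
        rw [Finset.sum_eq_single 0]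
        · simp [orth χ hχ]
        · intro w _ hw
          rw [orth χ hχ, if_neg (mul_ne_zero (mul_ne_zero h2 hs) hw), mul_zero]
        · simp

def nrm (z : Fin 2 → F) : F := ∑ i, z i ^ 2
def dp (z m : Fin 2 → F) : F := ∑ i, z i * m i

lemma Gfact (χ : AddChar F ℂ) (s : F) (z : Fin 2 → F) :
    ∑ m : Fin 2 → F, χ (s * nrm m + dp z m) = g1 χ s (z 0) * g1 χ s (z 1) := by
  unfold g1
  rw [Finset.sum_mul_sum]
  calc ∑ m : Fin 2 → F, χ (s * nrm m + dp z m)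
      = ∑ p : F × F, χ ((s * p.1 ^ 2 + z 0 * p.1) + (s * p.2 ^ 2 + z 1 * p.2)) := by
        refine Fintype.sum_equiv (piFinTwoEquiv fun _ => F) _ _ fun m => ?_
        simp only [piFinTwoEquiv_apply]
        congr 1
        simp [nrm, dp, Fin.sum_univ_two]
        ring
    _ = ∑ u : F, ∑ v : F, χ (s * u ^ 2 + z 0 * u) * χ (s * v ^ 2 + z 1 * v) := by
        rw [Fintype.sum_prod_type]
        exact Finset.sum_congr rfl fun u _ => Finset.sum_congr rfl fun v _ =>
          AddChar.map_add_eq_mul χ _ _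

lemma zero_iff (z : Fin 2 → F) : z = 0 ↔ (z 0 = 0 ∧ z 1 = 0) := by
  constructor
  · intro h; simp [h]
  · rintro ⟨h0, h1⟩; funext i; fin_cases i <;> simpa

lemma kernel (χ : AddChar F ℂ) (hχ : χ ≠ 1) (hchar : ringChar F ≠ 2) (z z' : Fin 2 → F) :
    ∑ m : Fin 2 → F, ∑ m' : Fin 2 → F,
      (if nrm m = nrm m' then χ (dp z m + dp z' m') else 0)
      = (Fintype.card F : ℂ)^3 * (if z = 0 then 1 else 0) * (if z' = 0 then 1 else 0)
        + (Fintype.card F : ℂ)^2 * (if nrm z = nrm z' then 1 else 0) - (Fintype.card F : ℂ) := by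
  have h2 : (2 : F) ≠ 0 := Ring.two_ne_zero hchar
  have h4 : (4 : F) ≠ 0 := by
    have : (4 : F) = 2 * 2 := by norm_num
    rw [this]; exact mul_ne_zero h2 h2
  set q : ℂ := (Fintype.card F : ℂ) with hq
  have hq0 : q ≠ 0 := Nat.cast_ne_zero.mpr Fintype.card_ne_zero
  set P : F → ℂ := fun s => (g1 χ s (z 0) * g1 χ s (z 1)) * (g1 χ (-s) (z' 0) * g1 χ (-s) (z' 1))
    with hP
  -- step 1: indicator
  have step1 : ∀ m m' : Fin 2 → F,
      (if nrm m = nrm m' then χ (dp z m + dp z' m') else 0)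
      = q⁻¹ * ∑ s : F, χ (s * nrm m + dp z m) * χ (-s * nrm m' + dp z' m') := by
    intro m m'
    have e1 : ∀ s : F, χ (s * nrm m + dp z m) * χ (-s * nrm m' + dp z' m')
        = χ (s * (nrm m - nrm m')) * χ (dp z m + dp z' m') := by
      intro s
      rw [← AddChar.map_add_eq_mul, ← AddChar.map_add_eq_mul]
      congr 1; ring
    simp_rw [e1]
    rw [← Finset.sum_mul, orth χ hχ]
    simp only [sub_eq_zero]
    split_ifs with h
    · field_simp
      rfl
    · simp
  have key : ∑ m : Fin 2 → F, ∑ m' : Fin 2 → F,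
      (if nrm m = nrm m' then χ (dp z m + dp z' m') else 0) = q⁻¹ * ∑ s : F, P s := by
    simp_rw [step1, ← Finset.mul_sum]
    congr 1
    calc ∑ m : Fin 2 → F, ∑ m' : Fin 2 → F, ∑ s : F,
          χ (s * nrm m + dp z m) * χ (-s * nrm m' + dp z' m')
        = ∑ m : Fin 2 → F, ∑ s : F, ∑ m' : Fin 2 → F,
          χ (s * nrm m + dp z m) * χ (-s * nrm m' + dp z' m') := by
          exact Finset.sum_congr rfl fun m _ => Finset.sum_comm
      _ = ∑ s : F, ∑ m : Fin 2 → F, ∑ m' : Fin 2 → F,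
          χ (s * nrm m + dp z m) * χ (-s * nrm m' + dp z' m') := Finset.sum_comm
      _ = ∑ s : F, P s := by
          refine Finset.sum_congr rfl fun s _ => ?_
          rw [← Finset.sum_mul_sum, Gfact χ s z, Gfact χ (-s) z']
  rw [key]
  -- compute P 0
  have hprod : ∀ (w : Fin 2 → F),
      (if w 0 = 0 then q else 0) * (if w 1 = 0 then q else 0)
        = q^2 * (if w = 0 then 1 else 0) := by
    intro w
    rcases eq_or_ne w 0 with hw | hw
    · simp [hw]; ring
    · rcases not_and_or.mp (mt (zero_iff w).mpr hw) with h | h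
      · rw [if_neg h, zero_mul, if_neg hw, mul_zero]
      · rw [if_neg h, mul_zero, if_neg hw, mul_zero]
  have hP0 : P 0 = q^4 * (if z = 0 then 1 else 0) * (if z' = 0 then 1 else 0) := by
    have e : P 0 = (g1 χ 0 (z 0) * g1 χ 0 (z 1)) * (g1 χ (-0) (z' 0) * g1 χ (-0) (z' 1)) := rfl
    rw [e, neg_zero]
    simp only [g1_zero χ hχ]
    rw [hprod z, hprod z']
    ring
  -- compute P s for s ≠ 0
  have hPs : ∀ s : F, s ≠ 0 → P s = q^2 * χ ((nrm z' - nrm z) / (4 * s)) := by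
    intro s hs
    have hns : (-s : F) ≠ 0 := neg_ne_zero.mpr hs
    have hgg := g1_mul χ hχ hchar hs
    simp only [hP]
    rw [g1_shift χ hchar hs (z 0), g1_shift χ hchar hs (z 1),
      g1_shift χ hchar hns (z' 0), g1_shift χ hchar hns (z' 1)]
    calc (χ (-(z 0 ^ 2 / (4 * s))) * g1 χ s 0 * (χ (-(z 1 ^ 2 / (4 * s))) * g1 χ s 0)) *
          (χ (-(z' 0 ^ 2 / (4 * -s))) * g1 χ (-s) 0 * (χ (-(z' 1 ^ 2 / (4 * -s))) * g1 χ (-s) 0))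
        = (χ (-(z 0 ^ 2 / (4 * s))) * χ (-(z 1 ^ 2 / (4 * s))) *
            (χ (-(z' 0 ^ 2 / (4 * -s))) * χ (-(z' 1 ^ 2 / (4 * -s))))) *
          ((g1 χ s 0 * g1 χ (-s) 0) * (g1 χ s 0 * g1 χ (-s) 0)) := by ring
      _ = q^2 * χ ((nrm z' - nrm z) / (4 * s)) := by
          rw [hgg, ← AddChar.map_add_eq_mul, ← AddChar.map_add_eq_mul, ← AddChar.map_add_eq_mul]
          have harg : -(z 0 ^ 2 / (4 * s)) + -(z 1 ^ 2 / (4 * s))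
              + (-(z' 0 ^ 2 / (4 * -s)) + -(z' 1 ^ 2 / (4 * -s)))
              = (nrm z' - nrm z) / (4 * s) := by
            simp only [nrm, Fin.sum_univ_two]
            field_simp
            ring
          rw [harg]
          ring
  -- split the sum over s
  rw [← Finset.add_sum_erase _ P (Finset.mem_univ 0), hP0]
  have herase : ∑ s ∈ Finset.univ.erase 0, P s
      = q^2 * ((if nrm z = nrm z' then q else 0) - 1) := by
    rw [Finset.sum_congr rfl fun s hs => hPs s (Finset.mem_erase.mp hs).1]
    rw [← Finset.mul_sum]
    congr 1
    have hbij : ∑ s ∈ Finset.univ.erase 0, χ ((nrm z' - nrm z) / (4 * s))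
        = ∑ r ∈ Finset.univ.erase 0, χ (r * ((nrm z' - nrm z) / 4)) := by
      refine Finset.sum_nbij' (fun s => s⁻¹) (fun r => r⁻¹) ?_ ?_ ?_ ?_ ?_
      · intro a ha
        exact Finset.mem_erase.mpr ⟨inv_ne_zero (Finset.mem_erase.mp ha).1, Finset.mem_univ _⟩
      · intro a ha
        exact Finset.mem_erase.mpr ⟨inv_ne_zero (Finset.mem_erase.mp ha).1, Finset.mem_univ _⟩
      · intro a _; exact inv_inv a
      · intro a _; exact inv_inv a
      · intro a ha
        congr 1
        rw [inv_mul_eq_div, div_div]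
    have h40 : (nrm z' - nrm z) / 4 = 0 ↔ nrm z = nrm z' := by
      rw [div_eq_zero_iff, sub_eq_zero]
      constructor
      · rintro (h | h)
        · exact h.symm
        · exact absurd h h4
      · intro h
        exact Or.inl h.symm
    have hful : ∑ r ∈ Finset.univ.erase 0, χ (r * ((nrm z' - nrm z) / 4))
        = (if (nrm z' - nrm z) / 4 = 0 then q else 0) - 1 := by
      have hfull := Finset.add_sum_erase Finset.univ (fun r => χ (r * ((nrm z' - nrm z) / 4)))
        (Finset.mem_univ 0)
      simp only [zero_mul, AddChar.map_zero_eq_one] at hfull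
      rw [orth χ hχ] at hfull
      exact eq_sub_of_add_eq' hfull
    rw [hbij, hful, if_congr h40 rfl rfl]
  rw [herase]
  split_ifs <;> field_simp <;> ring

lemma conj_char (χ : AddChar F ℂ) (a : F) : (starRingEnd ℂ) (χ a) = χ (-a) := by
  rw [AddChar.starComp_apply (Nat.pos_of_ne_zero (CharP.ringChar_ne_zero_of_finite F)),
    AddChar.inv_apply]

lemma sq_filter {ι : Type*} (A : Finset ι) (f : ι → F) (b : ι → ℂ) :
    ∑ t : F, (∑ i ∈ A.filter (fun i => f i = t), b i)^2
      = ∑ i ∈ A, ∑ j ∈ A, (if f i = f j then b i * b j else 0) := by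
  simp_rw [Finset.sum_filter, sq, Finset.sum_mul_sum]
  rw [Finset.sum_comm]
  refine Finset.sum_congr rfl fun i _ => ?_
  rw [Finset.sum_comm]
  refine Finset.sum_congr rfl fun j _ => ?_
  rw [Finset.sum_eq_single (f i)]
  · rw [if_pos rfl]
    rcases eq_or_ne (f i) (f j) with h | h
    · simp [h]
    · simp [h, Ne.symm h]
  · intro t _ ht
    rw [if_neg (Ne.symm ht), zero_mul]
  · simp

lemma swap4 {α β : Type*} [Fintype α] (D : Finset β) (f : α → α → β → β → ℂ) :
    ∑ m : α, ∑ m' : α, ∑ p ∈ D, ∑ p' ∈ D, f m m' p p'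
      = ∑ p ∈ D, ∑ p' ∈ D, ∑ m : α, ∑ m' : α, f m m' p p' := by
  calc ∑ m : α, ∑ m' : α, ∑ p ∈ D, ∑ p' ∈ D, f m m' p p'
      = ∑ m : α, ∑ p ∈ D, ∑ m' : α, ∑ p' ∈ D, f m m' p p' :=
        Finset.sum_congr rfl fun m _ => Finset.sum_comm
    _ = ∑ p ∈ D, ∑ m : α, ∑ m' : α, ∑ p' ∈ D, f m m' p p' := Finset.sum_comm
    _ = ∑ p ∈ D, ∑ m : α, ∑ p' ∈ D, ∑ m' : α, f m m' p p' :=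
        Finset.sum_congr rfl fun p _ => Finset.sum_congr rfl fun m _ => Finset.sum_comm
    _ = ∑ p ∈ D, ∑ p' ∈ D, ∑ m : α, ∑ m' : α, f m m' p p' :=
        Finset.sum_congr rfl fun p _ => Finset.sum_comm

lemma mydiag (E : Finset (Fin 2 → F)) :
    ∑ p ∈ E ×ˢ E, (if p.1 - p.2 = 0 then (1:ℂ) else 0) = (E.card : ℂ) := by
  simp_rw [sub_eq_zero]
  rw [Finset.sum_product]
  have : ∀ x ∈ E, ∑ y ∈ E, (if x = y then (1:ℂ) else 0) = 1 := by
    intro x hx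
    rw [Finset.sum_ite_eq E x (fun _ => (1:ℂ)), if_pos hx]
  rw [Finset.sum_congr rfl this, Finset.sum_const, nsmul_eq_mul, mul_one]

lemma central (χ : AddChar F ℂ) (hχ : χ ≠ 1) (hchar : ringChar F ≠ 2) (E : Finset (Fin 2 → F)) :
    ∑ m : Fin 2 → F, ∑ m' : Fin 2 → F,
      (if nrm m = nrm m' then
        (∑ p ∈ E ×ˢ E, χ (dp (p.2 - p.1) m)) * (∑ p' ∈ E ×ˢ E, χ (dp (p'.2 - p'.1) m')) else 0)
      = (Fintype.card F : ℂ)^3 * (E.card : ℂ)^2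
        + (Fintype.card F : ℂ)^2 * (∑ p ∈ E ×ˢ E, ∑ p' ∈ E ×ˢ E,
            (if nrm (p.2 - p.1) = nrm (p'.2 - p'.1) then (1:ℂ) else 0))
        - (Fintype.card F : ℂ) * (E.card : ℂ)^4 := by
  set q : ℂ := (Fintype.card F : ℂ) with hq
  calc ∑ m : Fin 2 → F, ∑ m' : Fin 2 → F,
      (if nrm m = nrm m' then
        (∑ p ∈ E ×ˢ E, χ (dp (p.2 - p.1) m)) * (∑ p' ∈ E ×ˢ E, χ (dp (p'.2 - p'.1) m')) else 0)
      = ∑ m : Fin 2 → F, ∑ m' : Fin 2 → F, ∑ p ∈ E ×ˢ E, ∑ p' ∈ E ×ˢ E,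
          (if nrm m = nrm m' then (1:ℂ) else 0) * (χ (dp (p.2 - p.1) m) * χ (dp (p'.2 - p'.1) m')) := by
        refine Finset.sum_congr rfl fun m _ => Finset.sum_congr rfl fun m' _ => ?_
        rw [Finset.sum_mul_sum, ← boole_mul, Finset.mul_sum]
        refine Finset.sum_congr rfl fun p _ => Finset.mul_sum _ _ _
    _ = ∑ p ∈ E ×ˢ E, ∑ p' ∈ E ×ˢ E, ∑ m : Fin 2 → F, ∑ m' : Fin 2 → F,
          (if nrm m = nrm m' then (1:ℂ) else 0) * (χ (dp (p.2 - p.1) m) * χ (dp (p'.2 - p'.1) m')) :=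
        swap4 _ _
    _ = ∑ p ∈ E ×ˢ E, ∑ p' ∈ E ×ˢ E,
          (q^3 * (if p.2 - p.1 = 0 then (1:ℂ) else 0) * (if p'.2 - p'.1 = 0 then (1:ℂ) else 0)
            + q^2 * (if nrm (p.2 - p.1) = nrm (p'.2 - p'.1) then (1:ℂ) else 0) - q) := by
        refine Finset.sum_congr rfl fun p _ => Finset.sum_congr rfl fun p' _ => ?_
        rw [← kernel χ hχ hchar (p.2 - p.1) (p'.2 - p'.1)]
        refine Finset.sum_congr rfl fun m _ => Finset.sum_congr rfl fun m' _ => ?_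
        rw [← AddChar.map_add_eq_mul, boole_mul]
    _ = q^3 * (E.card : ℂ)^2
        + q^2 * (∑ p ∈ E ×ˢ E, ∑ p' ∈ E ×ˢ E,
            (if nrm (p.2 - p.1) = nrm (p'.2 - p'.1) then (1:ℂ) else 0))
        - q * (E.card : ℂ)^4 := by
        have hd : ∑ p ∈ E ×ˢ E, (if p.2 - p.1 = 0 then (1:ℂ) else 0) = (E.card : ℂ) := by
          rw [← mydiag E]
          refine Finset.sum_congr rfl fun p _ =>
            if_congr (by rw [sub_eq_zero, sub_eq_zero]; exact ⟨Eq.symm, Eq.symm⟩) rfl rfl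
        simp only [Finset.sum_add_distrib, Finset.sum_sub_distrib, Finset.sum_const,
          nsmul_eq_mul, Finset.card_product]
        have h1 : ∑ p ∈ E ×ˢ E, ∑ p' ∈ E ×ˢ E,
            q^3 * (if p.2 - p.1 = 0 then (1:ℂ) else 0) * (if p'.2 - p'.1 = 0 then (1:ℂ) else 0)
            = q^3 * (E.card : ℂ)^2 := by
          simp_rw [mul_assoc, ← Finset.mul_sum]
          rw [← Finset.sum_mul, hd]
          ring
        rw [h1]
        have h2 : ∑ p ∈ E ×ˢ E, ∑ p' ∈ E ×ˢ E,
            q^2 * (if nrm (p.2 - p.1) = nrm (p'.2 - p'.1) then (1:ℂ) else 0)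
            = q^2 * ∑ p ∈ E ×ˢ E, ∑ p' ∈ E ×ˢ E,
                (if nrm (p.2 - p.1) = nrm (p'.2 - p'.1) then (1:ℂ) else 0) := by
          simp_rw [← Finset.mul_sum]
        rw [h2]
        push_cast
        ring

/-- For `E ⊆ 𝔽_q²` and `ν(t)` the number of pairs in `E × E` at distance `t`:
`∑_t ν(t)² = q⁶ ∑_t (∑_{m ∈ S_t} |Ê(m)|²)² + q⁻¹|E|⁴ - q|E|²`. -/
theorem stmt_1 (F : Type) [Field F] [Fintype F] [DecidableEq F]
    (hchar : ringChar F ≠ 2)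
    (χ : AddChar F ℂ) (hχ : χ ≠ 1)
    (E : Finset (Fin 2 → F)) :
    ∑ t : F, (((E ×ˢ E).filter
        (fun p : (Fin 2 → F) × (Fin 2 → F) => ∑ i, (p.1 i - p.2 i) ^ 2 = t)).card : ℝ) ^ 2
      = (Fintype.card F : ℝ) ^ 6 *
          ∑ t : F, (∑ m ∈ Finset.univ.filter (fun m : Fin 2 → F => ∑ i, m i ^ 2 = t),
            ‖(Fintype.card F : ℂ)⁻¹ ^ 2 * ∑ x ∈ E, χ (-(∑ i, x i * m i))‖ ^ 2) ^ 2
        + (Fintype.card F : ℝ)⁻¹ * (E.card : ℝ) ^ 4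
        - (Fintype.card F : ℝ) * (E.card : ℝ) ^ 2 := by
  have hq0 : (Fintype.card F : ℂ) ≠ 0 := Nat.cast_ne_zero.mpr Fintype.card_ne_zero
  set q : ℂ := (Fintype.card F : ℂ) with hqdef
  -- the complex version
  have hC : ∑ t : F, (((E ×ˢ E).filter
        (fun p : (Fin 2 → F) × (Fin 2 → F) => ∑ i, (p.1 i - p.2 i) ^ 2 = t)).card : ℂ) ^ 2
      = q ^ 6 *
          ∑ t : F, (∑ m ∈ Finset.univ.filter (fun m : Fin 2 → F => ∑ i, m i ^ 2 = t),
            ((‖(Fintype.card F : ℂ)⁻¹ ^ 2 * ∑ x ∈ E, χ (-(∑ i, x i * m i))‖ ^ 2 : ℝ) : ℂ)) ^ 2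
        + q⁻¹ * (E.card : ℂ) ^ 4
        - q * (E.card : ℂ) ^ 2 := by
    -- Step 1: LHS as double sum of indicators
    have hLHS : ∑ t : F, (((E ×ˢ E).filter
          (fun p : (Fin 2 → F) × (Fin 2 → F) => ∑ i, (p.1 i - p.2 i) ^ 2 = t)).card : ℂ) ^ 2
        = ∑ p ∈ E ×ˢ E, ∑ p' ∈ E ×ˢ E,
            (if (∑ i, (p.1 i - p.2 i) ^ 2) = (∑ i, (p'.1 i - p'.2 i) ^ 2) then (1:ℂ) else 0) := by
      have := sq_filter (E ×ˢ E)
        (fun p : (Fin 2 → F) × (Fin 2 → F) => ∑ i, (p.1 i - p.2 i) ^ 2) (fun _ => (1:ℂ))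
      simp only [mul_one] at this
      rw [← this]
      refine Finset.sum_congr rfl fun t _ => ?_
      rw [Finset.sum_const, nsmul_eq_mul, mul_one]
    -- Step 2: the weight
    have hw : ∀ m : Fin 2 → F,
        ((‖(Fintype.card F : ℂ)⁻¹ ^ 2 * ∑ x ∈ E, χ (-(∑ i, x i * m i))‖ ^ 2 : ℝ) : ℂ)
        = q⁻¹ ^ 4 * ∑ p ∈ E ×ˢ E, χ (dp (p.2 - p.1) m) := by
      intro m
      set w : ℂ := (Fintype.card F : ℂ)⁻¹ ^ 2 * ∑ x ∈ E, χ (-(∑ i, x i * m i)) with hwdef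
      have h1 : ((‖w‖ ^ 2 : ℝ) : ℂ) = w * (starRingEnd ℂ) w := by
        rw [Complex.sq_norm, Complex.mul_conj]
      rw [h1, hwdef]
      have hconj : (starRingEnd ℂ) ((Fintype.card F : ℂ)⁻¹ ^ 2 * ∑ x ∈ E, χ (-(∑ i, x i * m i)))
          = (Fintype.card F : ℂ)⁻¹ ^ 2 * ∑ y ∈ E, χ (∑ i, y i * m i) := by
        rw [map_mul, map_sum]
        simp only [map_pow, map_inv₀, Complex.conj_natCast]
        congr 1
        refine Finset.sum_congr rfl fun y _ => ?_
        rw [conj_char χ, neg_neg]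
      rw [hconj]
      have hff : (∑ x ∈ E, χ (-(∑ i, x i * m i))) * (∑ y ∈ E, χ (∑ i, y i * m i))
          = ∑ p ∈ E ×ˢ E, χ (dp (p.2 - p.1) m) := by
        rw [Finset.sum_mul_sum, Finset.sum_product]
        refine Finset.sum_congr rfl fun x _ => Finset.sum_congr rfl fun y _ => ?_
        rw [← AddChar.map_add_eq_mul]
        congr 1
        simp only [dp, Pi.sub_apply, Fin.sum_univ_two]
        ring
      calc (Fintype.card F : ℂ)⁻¹ ^ 2 * (∑ x ∈ E, χ (-(∑ i, x i * m i))) *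
            ((Fintype.card F : ℂ)⁻¹ ^ 2 * ∑ y ∈ E, χ (∑ i, y i * m i))
          = q⁻¹ ^ 4 * ((∑ x ∈ E, χ (-(∑ i, x i * m i))) * (∑ y ∈ E, χ (∑ i, y i * m i))) := by
            rw [hqdef]; ring
        _ = q⁻¹ ^ 4 * ∑ p ∈ E ×ˢ E, χ (dp (p.2 - p.1) m) := by rw [hff]
    simp_rw [hw, ← Finset.mul_sum, mul_pow, ← Finset.mul_sum]
    -- Step 3: expand the square of the m-sum
    rw [sq_filter Finset.univ (fun m : Fin 2 → F => ∑ i, m i ^ 2)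
      (fun m => ∑ p ∈ E ×ˢ E, χ (dp (p.2 - p.1) m))]
    -- Step 4: identify conditions with nrm and apply central
    have hcond : ∑ m : Fin 2 → F, ∑ m' : Fin 2 → F,
        (if (∑ i, m i ^ 2) = (∑ i, m' i ^ 2) then
          (∑ p ∈ E ×ˢ E, χ (dp (p.2 - p.1) m)) * (∑ p' ∈ E ×ˢ E, χ (dp (p'.2 - p'.1) m')) else 0)
        = ∑ m : Fin 2 → F, ∑ m' : Fin 2 → F,
        (if nrm m = nrm m' then
          (∑ p ∈ E ×ˢ E, χ (dp (p.2 - p.1) m)) * (∑ p' ∈ E ×ˢ E, χ (dp (p'.2 - p'.1) m')) else 0) := by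
      refine Finset.sum_congr rfl fun m _ => Finset.sum_congr rfl fun m' _ =>
        if_congr (by rw [nrm, nrm]) rfl rfl
    rw [hcond, central χ hχ hchar E]
    rw [hLHS]
    have hS : ∑ p ∈ E ×ˢ E, ∑ p' ∈ E ×ˢ E,
        (if nrm (p.2 - p.1) = nrm (p'.2 - p'.1) then (1:ℂ) else 0)
        = ∑ p ∈ E ×ˢ E, ∑ p' ∈ E ×ˢ E,
            (if (∑ i, (p.1 i - p.2 i) ^ 2) = (∑ i, (p'.1 i - p'.2 i) ^ 2) then (1:ℂ) else 0) := by
      refine Finset.sum_congr rfl fun p _ => Finset.sum_congr rfl fun p' _ =>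
        if_congr ?_ rfl rfl
      have e : ∀ r : (Fin 2 → F) × (Fin 2 → F), nrm (r.2 - r.1) = ∑ i, (r.1 i - r.2 i) ^ 2 := by
        intro r
        simp only [nrm, Pi.sub_apply, Fin.sum_univ_two]
        ring
      rw [e p, e p']
    rw [hS]
    field_simp
    ring
  rw [hqdef] at hC
  apply Complex.ofReal_injective
  push_cast
  exact_mod_cast hC
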